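/- arXiv:2009.05490 — 3 statements merged into one kernel-verified Lean document; each statement's English description precedes it below -/
import Mathlib

section
/- Let n ≥ 1, let x̂, x_λ ∈ ℝⁿ with x̂ ≠ x_λ, set L = ‖x̂ − x_λ‖ and ℓ' = (x̂ − x_λ)/L, let t̂ ∈ ℝⁿ, and set t_λ = −(I − 2ℓ'ℓ'ᵀ)t̂. Define φ(σ) = x_λ + σℓ' + (t_λ − ℓ')K0(σ) + (t̂ − ℓ')K1(σ), where K0(σ) = σ − 2σ²/L + σ³/L² and K1(σ) = −σ²/L + σ³/L². Then φ(L/2) = (x_λ + x̂)/2 − (L/4)(I − ℓ'ℓ'ᵀ)t̂ and φ'(L/2) = ((3 − ⟨ℓ', t̂⟩)/2)ℓ'. -/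
open scoped RealInnerProductSpace

set_option maxHeartbeats 1000000

/-- For the cubic Hermite curve `φ` with `t_λ = -(I - 2ℓ'ℓ'ᵀ)t̂`, the midpoint
value and derivative are `φ(L/2) = (x_λ + x̂)/2 - (L/4)(I - ℓ'ℓ'ᵀ)t̂` and
`φ'(L/2) = ((3 - ⟨ℓ', t̂⟩)/2)ℓ'`. -/
theorem stmt_5 (n : ℕ) (hn : 1 ≤ n)
    (xhat xlam that : EuclideanSpace ℝ (Fin n)) (hne : xhat ≠ xlam)
    (L : ℝ) (hL : L = ‖xhat - xlam‖)
    (l' : EuclideanSpace ℝ (Fin n)) (hl' : l' = L⁻¹ • (xhat - xlam))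
    (tlam : EuclideanSpace ℝ (Fin n))
    (htlam : tlam = -(that - (2 * ⟪l', that⟫) • l'))
    (φ : ℝ → EuclideanSpace ℝ (Fin n))
    (hφ : ∀ σ : ℝ, φ σ = xlam + σ • l'
        + (σ - 2 * σ ^ 2 / L + σ ^ 3 / L ^ 2) • (tlam - l')
        + (-σ ^ 2 / L + σ ^ 3 / L ^ 2) • (that - l')) :
    φ (L / 2) = (1 / 2 : ℝ) • (xlam + xhat) - (L / 4) • (that - ⟪l', that⟫ • l') ∧
      deriv φ (L / 2) = ((3 - ⟪l', that⟫) / 2) • l' := by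
  have hL0 : L ≠ 0 := by
    rw [hL]
    simpa using sub_ne_zero_of_ne hne
  have hφfun : φ = fun σ : ℝ => xlam + σ • l'
        + (σ - 2 * σ ^ 2 / L + σ ^ 3 / L ^ 2) • (tlam - l')
        + (-σ ^ 2 / L + σ ^ 3 / L ^ 2) • (that - l') := funext hφ
  have ha : (1 - 2 * (2 * (L/2) ^ 1) / L + 3 * (L/2) ^ 2 / L ^ 2) = -(1/4 : ℝ) := by
    field_simp
    ring
  have hb : (-(2 * (L/2) ^ 1) / L + 3 * (L/2) ^ 2 / L ^ 2) = -(1/4 : ℝ) := by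
    field_simp
    ring
  constructor
  · rw [hφ, htlam, hl']
    match_scalars <;> field_simp <;> ring
  · have hf : HasDerivAt (fun σ : ℝ => σ - 2 * σ ^ 2 / L + σ ^ 3 / L ^ 2)
        (1 - 2 * (2 * (L/2) ^ 1) / L + 3 * (L/2) ^ 2 / L ^ 2) (L/2) := by
      exact ((hasDerivAt_id (L/2)).sub
        (((hasDerivAt_pow 2 (L/2)).const_mul 2).div_const L)).add
        ((hasDerivAt_pow 3 (L/2)).div_const (L ^ 2))
    have hg : HasDerivAt (fun σ : ℝ => -σ ^ 2 / L + σ ^ 3 / L ^ 2)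
        (-(2 * (L/2) ^ 1) / L + 3 * (L/2) ^ 2 / L ^ 2) (L/2) := by
      exact (((hasDerivAt_pow 2 (L/2)).neg.div_const L)).add
        ((hasDerivAt_pow 3 (L/2)).div_const (L ^ 2))
    have hD : HasDerivAt φ
        ((0 : EuclideanSpace ℝ (Fin n)) + (1 : ℝ) • l'
          + (1 - 2 * (2 * (L/2) ^ 1) / L + 3 * (L/2) ^ 2 / L ^ 2) • (tlam - l')
          + (-(2 * (L/2) ^ 1) / L + 3 * (L/2) ^ 2 / L ^ 2) • (that - l')) (L/2) := by
      rw [hφfun]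
      exact (((hasDerivAt_const (L/2) xlam).add
        ((hasDerivAt_id (L/2)).smul_const l')).add (hf.smul_const (tlam - l'))).add
        (hg.smul_const (that - l'))
    rw [hD.deriv, ha, hb, htlam]
    module
end

section
/- Let f, F : [0, 1] → ℝ be differentiable, with F twice differentiable, and suppose there exist constants m > 0 and δ ≥ 0 such that F''(λ) ≥ m for all λ ∈ [0, 1] and |f'(λ) − F'(λ)| ≤ δ for all λ ∈ [0, 1]. Let λ_f, λ_F ∈ (0, 1) satisfy f'(λ_f) = 0 and F'(λ_F) = 0. Then |λ_f − λ_F| ≤ δ/m. -/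
/-- Stability of interior critical points: if `F'' ≥ m > 0` on `[0, 1]` and
`|f' − F'| ≤ δ` on `[0, 1]`, then interior critical points `λ_f` of `f` and `λ_F` of `F`
satisfy `|λ_f − λ_F| ≤ δ/m`. -/
theorem stmt_14 (f F f' F' F'' : ℝ → ℝ) (m δ : ℝ) (hm : 0 < m) (hδ : 0 ≤ δ)
    (hf : ∀ lam ∈ Set.Icc (0 : ℝ) 1, HasDerivWithinAt f (f' lam) (Set.Icc 0 1) lam)
    (hF : ∀ lam ∈ Set.Icc (0 : ℝ) 1, HasDerivWithinAt F (F' lam) (Set.Icc 0 1) lam)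
    (hF' : ∀ lam ∈ Set.Icc (0 : ℝ) 1, HasDerivWithinAt F' (F'' lam) (Set.Icc 0 1) lam)
    (hF'' : ∀ lam ∈ Set.Icc (0 : ℝ) 1, m ≤ F'' lam)
    (hclose : ∀ lam ∈ Set.Icc (0 : ℝ) 1, |f' lam - F' lam| ≤ δ)
    (lamf lamF : ℝ) (hlf : lamf ∈ Set.Ioo (0 : ℝ) 1) (hlF : lamF ∈ Set.Ioo (0 : ℝ) 1)
    (hcritf : f' lamf = 0) (hcritF : F' lamF = 0) :
    |lamf - lamF| ≤ δ / m := by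
  have hFδ : |F' lamf| ≤ δ := by
    have := hclose lamf (Set.Ioo_subset_Icc_self hlf)
    rw [hcritf] at this
    simpa [abs_sub_comm] using this
  have key : ∀ a b : ℝ, a ∈ Set.Ioo (0:ℝ) 1 → b ∈ Set.Ioo (0:ℝ) 1 → a < b →
      m * (b - a) ≤ F' b - F' a := by
    intro a b ha hb hab
    have hsub : Set.Icc a b ⊆ Set.Icc (0:ℝ) 1 :=
      Set.Icc_subset_Icc ha.1.le hb.2.le
    have hcont : ContinuousOn F' (Set.Icc a b) := fun x hx =>
      ((hF' x (hsub hx)).continuousWithinAt).mono hsub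
    have hderiv : ∀ x ∈ Set.Ioo a b, HasDerivAt F' (F'' x) x := by
      intro x hx
      have hx01 : x ∈ Set.Ioo (0:ℝ) 1 := ⟨lt_of_lt_of_le ha.1 hx.1.le, lt_of_le_of_lt hx.2.le hb.2⟩
      exact (hF' x (Set.Ioo_subset_Icc_self hx01)).hasDerivAt
        (Icc_mem_nhds hx01.1 hx01.2)
    obtain ⟨c, hc, hceq⟩ := exists_hasDerivAt_eq_slope F' F'' hab hcont hderiv
    have hc01 : c ∈ Set.Icc (0:ℝ) 1 :=
      hsub (Set.Ioo_subset_Icc_self hc)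
    have hmc : m ≤ F'' c := hF'' c hc01
    have hba : 0 < b - a := sub_pos.mpr hab
    calc m * (b - a) ≤ F'' c * (b - a) := by nlinarith
      _ = F' b - F' a := by rw [hceq]; field_simp
  rw [abs_le]
  constructor
  · rcases lt_or_ge lamf lamF with h | h
    · have hk := key lamf lamF hlf hlF h
      rw [hcritF] at hk
      have : -F' lamf ≤ δ := (neg_le_abs _).trans hFδ
      rw [neg_le, ← sub_nonneg]
      have : lamF - lamf ≤ δ / m := by
        rw [le_div_iff₀ hm]
        nlinarith
      linarith
    · have : 0 ≤ δ / m := div_nonneg hδ hm.le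
      linarith [abs_nonneg (lamf - lamF)]
  · rcases lt_or_ge lamF lamf with h | h
    · have hk := key lamF lamf hlF hlf h
      rw [hcritF] at hk
      have : F' lamf ≤ δ := (le_abs_self _).trans hFδ
      rw [le_div_iff₀ hm]
      nlinarith
    · have : 0 ≤ δ / m := div_nonneg hδ hm.le
      linarith
end

section
/- Let n ≥ 1, let s₀ > 0 and v ∈ ℝⁿ with v ≠ 0, and define the slowness s(x) = (1/s₀ + ⟨v, x⟩)⁻¹ on the open set Ω = {x ∈ ℝⁿ : 1/s₀ + ⟨v, x⟩ > 0, x ≠ 0}. Define τ(x) = (1/‖v‖) log(u(x) + √(u(x)² − 1)), where u(x) = 1 + (1/2) s₀ s(x) ‖v‖² ‖x‖². Then τ is differentiable on Ω and ‖∇τ(x)‖ = s(x) for all x ∈ Ω. -/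
open scoped RealInnerProductSpace

lemma arcosh_deriv' (w : ℝ) (hw : 1 < w) :
    HasDerivAt (fun t : ℝ => Real.log (t + Real.sqrt (t ^ 2 - 1)))
      (1 / Real.sqrt (w ^ 2 - 1)) w := by
  have hpos : 0 < w ^ 2 - 1 := by nlinarith
  have hsq : 0 < Real.sqrt (w ^ 2 - 1) := Real.sqrt_pos.mpr hpos
  have h1 : HasDerivAt (fun t : ℝ => t ^ 2 - 1) (2 * w) w := by
    simpa using (hasDerivAt_pow 2 w).sub_const 1
  have h2 : HasDerivAt (fun t : ℝ => Real.sqrt (t ^ 2 - 1))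
      (1 / (2 * Real.sqrt (w ^ 2 - 1)) * (2 * w)) w :=
    (Real.hasDerivAt_sqrt hpos.ne').comp w h1
  have h3 : HasDerivAt (fun t : ℝ => t + Real.sqrt (t ^ 2 - 1))
      (1 + 1 / (2 * Real.sqrt (w ^ 2 - 1)) * (2 * w)) w := (hasDerivAt_id w).add h2
  have h4 : 0 < w + Real.sqrt (w ^ 2 - 1) := by positivity
  have h5 := (Real.hasDerivAt_log h4.ne').comp w h3
  convert h5 using 1
  any_goals rfl
  have hs2 : Real.sqrt (w ^ 2 - 1) ^ 2 = w ^ 2 - 1 := Real.sq_sqrt hpos.le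
  field_simp
  nlinarith [hs2, hsq, h4]

lemma key_calc' (s₀ a q V S : ℝ) (hs₀ : 0 < s₀) (ha : 0 < a)
    (hq : 0 < q) (hV : 0 < V) (hS : 0 < S)
    (hS2 : S^2 = (1 + 1/2*s₀*a⁻¹*V*q)^2 - 1) :
    1/(V*S^2) * ((s₀*V*a⁻¹)^2*q - 2*(s₀*V*a⁻¹)*(1/2*s₀*V*q*(a⁻¹)^2)*(a - 1/s₀)
      + (1/2*s₀*V*q*(a⁻¹)^2)^2*V) = (a⁻¹)^2 := by
  have hVS : V*S^2 ≠ 0 := by positivity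
  rw [div_mul_eq_mul_div, div_eq_iff hVS, hS2]
  field_simp
  ring

set_option maxHeartbeats 1000000 in
/-- For a linear speed of sound `1/s(x) = 1/s₀ + ⟨v, x⟩`, the function
`τ(x) = (1/‖v‖) cosh⁻¹(1 + ½ s₀ s(x) ‖v‖² ‖x‖²)`, where
`cosh⁻¹(u) = log(u + √(u² − 1))`, is differentiable on
`Ω = {x : 1/s₀ + ⟨v, x⟩ > 0, x ≠ 0}` and solves the eikonal equation `‖∇τ(x)‖ = s(x)`. -/
theorem stmt_17 (n : ℕ) (hn : 1 ≤ n) (s₀ : ℝ) (hs₀ : 0 < s₀)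
    (v : EuclideanSpace ℝ (Fin n)) (hv : v ≠ 0)
    (Ω : Set (EuclideanSpace ℝ (Fin n)))
    (hΩ : Ω = {x | 0 < 1 / s₀ + ⟪v, x⟫ ∧ x ≠ 0})
    (s : EuclideanSpace ℝ (Fin n) → ℝ)
    (hs : ∀ x, s x = (1 / s₀ + ⟪v, x⟫)⁻¹)
    (u : EuclideanSpace ℝ (Fin n) → ℝ)
    (hu : ∀ x, u x = 1 + (1 / 2) * s₀ * s x * ‖v‖ ^ 2 * ‖x‖ ^ 2)
    (τ : EuclideanSpace ℝ (Fin n) → ℝ)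
    (hτ : ∀ x, τ x = (1 / ‖v‖) * Real.log (u x + Real.sqrt (u x ^ 2 - 1))) :
    ∀ x ∈ Ω, DifferentiableAt ℝ τ x ∧ ‖gradient τ x‖ = s x := by
  intro x hx
  rw [hΩ] at hx
  obtain ⟨hax, hx0⟩ := hx
  have hV : (0:ℝ) < ‖v‖ := norm_pos_iff.mpr hv
  have hq : (0:ℝ) < ‖x‖ := norm_pos_iff.mpr hx0
  have hueq : u = fun y : EuclideanSpace ℝ (Fin n) =>
      1 + 1 / 2 * s₀ * (1 / s₀ + ⟪v, y⟫)⁻¹ * ‖v‖ ^ 2 * ⟪y, y⟫ := by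
    funext y
    rw [hu y, hs y, real_inner_self_eq_norm_sq]
  set gu : EuclideanSpace ℝ (Fin n) :=
    (s₀ * ‖v‖ ^ 2 * (1 / s₀ + ⟪v, x⟫)⁻¹) • x
      - (1 / 2 * s₀ * ‖v‖ ^ 2 * ⟪x, x⟫ * ((1 / s₀ + ⟪v, x⟫)⁻¹) ^ 2) • v with hgu
  have hgradu : HasGradientAt u gu x := by
    rw [hueq]
    have hA : HasFDerivAt (fun y : EuclideanSpace ℝ (Fin n) => 1 / s₀ + ⟪v, y⟫)
        (innerSL ℝ v) x := (innerSL ℝ v).hasFDerivAt.const_add _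
    have hAinv := (hasDerivAt_inv hax.ne').comp_hasFDerivAt x hA
    have hQ := (hasFDerivAt_id x).inner ℝ (hasFDerivAt_id x)
    have hU := (((hAinv.const_mul (1 / 2 * s₀)).mul_const (‖v‖ ^ 2)).mul hQ).const_add 1
    rw [hasGradientAt_iff_hasFDerivAt]
    convert hU using 1
    any_goals rfl
    ext w
    simp [hgu, inner_sub_left, inner_smul_left, real_inner_comm x w, real_inner_comm v w]
    ring
  have hux : u x = 1 + 1 / 2 * s₀ * (1 / s₀ + ⟪v, x⟫)⁻¹ * ‖v‖ ^ 2 * ‖x‖ ^ 2 := by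
    rw [hu x, hs x]
  have hugt : 1 < u x := by
    rw [hux]
    have h0 : 0 < 1 / 2 * s₀ * (1 / s₀ + ⟪v, x⟫)⁻¹ * ‖v‖ ^ 2 * ‖x‖ ^ 2 := by positivity
    linarith
  have hupos : 0 < u x ^ 2 - 1 := by nlinarith
  set S : ℝ := Real.sqrt (u x ^ 2 - 1) with hS
  have hSpos : 0 < S := Real.sqrt_pos.mpr hupos
  have hS2 : S ^ 2 = u x ^ 2 - 1 := Real.sq_sqrt hupos.le
  set g : EuclideanSpace ℝ (Fin n) := (1 / ‖v‖ * (1 / S)) • gu with hg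
  have hgradτ : HasGradientAt τ g x := by
    have hτeq : τ = fun y => 1 / ‖v‖ * Real.log (u y + Real.sqrt (u y ^ 2 - 1)) :=
      funext hτ
    rw [hτeq]
    have hd := arcosh_deriv' (u x) hugt
    have hc := (hd.comp_hasFDerivAt x hgradu.hasFDerivAt).const_mul (1 / ‖v‖)
    rw [hasGradientAt_iff_hasFDerivAt]
    convert hc using 1
    any_goals rfl
    rw [hg, map_smul]
    simp [smul_smul, hS]
  refine ⟨hgradτ.differentiableAt, ?_⟩
  rw [hgradτ.gradient]
  have h1 : ‖g‖ ^ 2 = 1 / (‖v‖ ^ 2 * S ^ 2) * ⟪gu, gu⟫ := by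
    rw [← real_inner_self_eq_norm_sq]
    rw [hg, real_inner_smul_left, real_inner_smul_right]
    ring
  have h2 : ⟪gu, gu⟫ = (s₀ * ‖v‖ ^ 2 * (1 / s₀ + ⟪v, x⟫)⁻¹) ^ 2 * ‖x‖ ^ 2
      - 2 * (s₀ * ‖v‖ ^ 2 * (1 / s₀ + ⟪v, x⟫)⁻¹)
        * (1 / 2 * s₀ * ‖v‖ ^ 2 * ‖x‖ ^ 2 * (((1 / s₀ + ⟪v, x⟫)⁻¹)) ^ 2)
        * ((1 / s₀ + ⟪v, x⟫) - 1 / s₀)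
      + (1 / 2 * s₀ * ‖v‖ ^ 2 * ‖x‖ ^ 2 * (((1 / s₀ + ⟪v, x⟫)⁻¹)) ^ 2) ^ 2 * ‖v‖ ^ 2 := by
    simp only [hgu, inner_sub_left, inner_sub_right, real_inner_smul_left,
      real_inner_smul_right, real_inner_comm x v]
    simp only [real_inner_self_eq_norm_sq]
    ring
  have hnorm : ‖g‖ ^ 2 = ((1 / s₀ + ⟪v, x⟫)⁻¹) ^ 2 := by
    rw [h1, h2]
    exact key_calc' s₀ (1 / s₀ + ⟪v, x⟫) (‖x‖ ^ 2) (‖v‖ ^ 2) S hs₀ hax (by positivity)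
      (by positivity) hSpos (by rw [hS2, hux])
  rw [hs x]
  nlinarith [norm_nonneg g, hnorm, inv_pos.mpr hax]
end
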